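/- Let f : ℂ² → ℂ be f(x,y) = x(xy−1). The fiber f⁻¹(0) = {(x,y) ∈ ℂ² : x(xy−1) = 0} has exactly two connected components, while for every a ∈ ℂ with a ≠ 0 the fiber f⁻¹(a) = {(x,y) ∈ ℂ² : x(xy−1) = a} is path-connected. (This realizes the Betti number statement b₀(f⁻¹(0)) = 2 and b₀(f⁻¹(a)) = 1 for a ≠ 0.) -/

import Mathlib

open Set

private lemma compl_zero_pc : IsPathConnected ({(0 : ℂ)}ᶜ : Set ℂ) :=
  isPathConnected_compl_singleton_of_one_lt_rank
    (by rw [Complex.rank_real_complex]; exact Cardinal.one_lt_two) 0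

/-- Betti numbers in degree 0 for Broughton's map `f(x,y) = x(xy−1)`: the fiber over `0`
has exactly two connected components, while every fiber over a nonzero value is
path-connected. -/
theorem stmt_11 :
    Nat.card (ConnectedComponents {p : ℂ × ℂ // p.1 * (p.1 * p.2 - 1) = 0}) = 2 ∧
    ∀ a : ℂ, a ≠ 0 → PathConnectedSpace {p : ℂ × ℂ // p.1 * (p.1 * p.2 - 1) = a} := by
  constructor
  · -- two connected components over 0
    set X := {p : ℂ × ℂ // p.1 * (p.1 * p.2 - 1) = 0} with hX
    -- the clopen set U = {x = 0}
    set U : Set X := {p | p.1.1 = 0} with hU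
    have hUc : Uᶜ = {p : X | p.1.1 * p.1.2 = 1} := by
      ext p
      obtain ⟨⟨x, y⟩, hp⟩ := p
      simp only [hU, mem_compl_iff, mem_setOf_eq]
      constructor
      · intro hx
        have := mul_eq_zero.1 hp
        rcases this with h | h
        · exact absurd h hx
        · linear_combination h
      · intro h hx
        rw [hx] at h; simp at h
    have hUclopen : IsClopen U := by
      constructor
      · exact isClosed_eq (by fun_prop) continuous_const
      · rw [← compl_compl U, hUc]
        exact (isClosed_eq (by fun_prop) continuous_const).isOpen_compl
    -- the two base points
    have h00 : ((0 : ℂ) * ((0 : ℂ) * (0 : ℂ) - 1) = 0) := by ring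
    have h11 : ((1 : ℂ) * ((1 : ℂ) * (1 : ℂ) - 1) = 0) := by ring
    set q0 : X := ⟨(0, 0), h00⟩ with hq0
    set q1 : X := ⟨(1, 1), h11⟩ with hq1
    -- connected pieces
    have hS0 : IsPreconnected U := by
      have : U = Set.range (fun y : ℂ => (⟨(0, y), by ring⟩ : X)) := by
        ext p
        obtain ⟨⟨x, y⟩, hp⟩ := p
        simp only [hU, mem_setOf_eq, mem_range]
        constructor
        · intro hx; exact ⟨y, by simp [Subtype.ext_iff, Prod.ext_iff, hx.symm]⟩
        · rintro ⟨z, hz⟩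
          simpa [Subtype.ext_iff, Prod.ext_iff] using congrArg (fun q : X => q.1.1) hz.symm
      rw [this]
      exact isPreconnected_range (by fun_prop)
    have hS1 : IsPreconnected (Uᶜ : Set X) := by
      have hg : ∀ x : ℂ, x * (x * x⁻¹ - 1) = 0 := by
        intro x
        rcases eq_or_ne x 0 with h | h
        · simp [h]
        · rw [mul_inv_cancel₀ h]; ring
      have : Uᶜ = (fun x : ℂ => (⟨(x, x⁻¹), hg x⟩ : X)) '' {0}ᶜ := by
        rw [hUc]
        ext p
        obtain ⟨⟨x, y⟩, hp⟩ := p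
        simp only [mem_setOf_eq, mem_image, mem_compl_iff, mem_singleton_iff]
        constructor
        · intro h
          have hx : x ≠ 0 := by rintro rfl; simp at h
          refine ⟨x, hx, ?_⟩
          have hy : y = x⁻¹ := by field_simp; linear_combination h
          simp [Subtype.ext_iff, Prod.ext_iff, hy]
        · rintro ⟨z, hz, h⟩
          have h1 : z = x ∧ z⁻¹ = y := by
            have := congrArg Subtype.val h
            exact Prod.mk.inj this
          rw [← h1.1, ← h1.2, mul_inv_cancel₀ hz]
      rw [this]
      refine IsPreconnected.image compl_zero_pc.isConnected.isPreconnected _ ?_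
      exact Topology.IsEmbedding.subtypeVal.isInducing.continuousOn_iff.mpr
        (continuousOn_id.prodMk continuousOn_inv₀)
    -- count
    rw [Nat.card_eq_two_iff]
    refine ⟨ConnectedComponents.mk q0, ConnectedComponents.mk q1, ?_, ?_⟩
    · intro h
      rw [ConnectedComponents.coe_eq_coe] at h
      have : q1 ∈ connectedComponent q0 := h ▸ mem_connectedComponent
      have := hUclopen.connectedComponent_subset (show q0 ∈ U by simp [hU, hq0]) this
      simp [hU, hq1] at this
    · ext c
      simp only [mem_insert_iff, mem_singleton_iff, mem_univ, iff_true]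
      obtain ⟨p, rfl⟩ := ConnectedComponents.surjective_coe c
      by_cases hx : p.1.1 = 0
      · left
        rw [ConnectedComponents.coe_eq_coe]
        have h1 : U ⊆ connectedComponent q0 :=
          hS0.subset_connectedComponent (by simp [hU, hq0])
        exact (connectedComponent_eq (h1 hx)).symm
      · right
        rw [ConnectedComponents.coe_eq_coe]
        have h1 : (Uᶜ : Set X) ⊆ connectedComponent q1 :=
          hS1.subset_connectedComponent (by simp [hU, hq1])
        exact (connectedComponent_eq (h1 hx)).symm
  · -- nonzero fibers are path-connected
    intro a ha
    suffices h : IsPathConnected {p : ℂ × ℂ | p.1 * (p.1 * p.2 - 1) = a} from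
      isPathConnected_iff_pathConnectedSpace.mp h
    have hkey : {p : ℂ × ℂ | p.1 * (p.1 * p.2 - 1) = a} =
        (fun x : ℂ => (x, (a + x) / x ^ 2)) '' {0}ᶜ := by
      ext ⟨x, y⟩
      simp only [mem_setOf_eq, mem_image, mem_compl_iff, mem_singleton_iff]
      constructor
      · intro h
        have hx : x ≠ 0 := by rintro rfl; simp at h; exact ha h.symm
        refine ⟨x, hx, ?_⟩
        have hy : (a + x) / x ^ 2 = y := by
          field_simp
          linear_combination -h
        simp [Prod.ext_iff, hy]
      · rintro ⟨z, hz, h⟩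
        obtain ⟨rfl, rfl⟩ : z = x ∧ (a + z) / z ^ 2 = y := by
          simpa [Prod.ext_iff] using h
        field_simp
        ring
    rw [hkey]
    refine compl_zero_pc.image' ?_
    refine continuousOn_id.prodMk ?_
    exact ContinuousOn.div (by fun_prop) (by fun_prop) (by intro x hx; simpa using pow_ne_zero 2 hx)
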